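/- Imaginary-part identity: under the hypotheses of the energy identity for the generalized Rayleigh equation, with σ = σ_r + iσ_i and σ_i ≠ 0, one has ∫_a^b G''(y) |v(y)|² / |G(y) - σ|² dy = 0. -/

import Mathlib

open Set MeasureTheory intervalIntegral Complex

theorem imaginary_part_identity (a b : ℝ) (hab : a < b)
    (G : ℝ → ℝ) (hG : ContDiffOn ℝ 2 G (Icc a b)) (α : ℝ) (σ : ℂ)
    (hσ : σ.im ≠ 0)
    (v : ℝ → ℂ) (hv : ContDiffOn ℝ 2 v (Icc a b))
    (hvne : ∃ y ∈ Icc a b, v y ≠ 0)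
    (hva : v a = 0) (hvb : v b = 0)
    (heq : ∀ y ∈ Icc a b,
      deriv (deriv v) y =
        (((deriv (deriv G) y : ℝ) : ℂ) / (((G y : ℝ) : ℂ) - σ) + ((α ^ 2 : ℝ) : ℂ)) * v y) :
    ∫ y in a..b, deriv (deriv G) y * ‖v y‖ ^ 2 / ‖((G y : ℝ) : ℂ) - σ‖ ^ 2 = 0 := by
  have hUD : UniqueDiffOn ℝ (Icc a b) := uniqueDiffOn_Icc hab
  set D : ℝ → ℂ := derivWithin v (Icc a b) with hDdef
  set DG : ℝ → ℝ := derivWithin G (Icc a b) with hDGdef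
  set G2 : ℝ → ℝ := derivWithin DG (Icc a b) with hG2def
  have hD1 : ContDiffOn ℝ 1 D (Icc a b) := hv.derivWithin hUD (by norm_num)
  have hDc : ContinuousOn D (Icc a b) := hD1.continuousOn
  have hDG1 : ContDiffOn ℝ 1 DG (Icc a b) := hG.derivWithin hUD (by norm_num)
  have hG2c : ContinuousOn G2 (Icc a b) :=
    (hDG1.derivWithin (m := 0) hUD le_rfl).continuousOn
  have hvc : ContinuousOn v (Icc a b) := hv.continuousOn
  have hGc : ContinuousOn G (Icc a b) := hG.continuousOn
  have hwne : ∀ y : ℝ, ((G y : ℝ) : ℂ) - σ ≠ 0 := by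
    intro y hy0
    apply hσ
    have := congrArg Complex.im hy0
    simpa using this.symm
  -- the "nice" integrand
  set h : ℝ → ℂ := fun y =>
    (starRingEnd ℂ) (D y) * D y +
      (starRingEnd ℂ) (v y) * ((((G2 y : ℝ) : ℂ) / (((G y : ℝ) : ℂ) - σ) + ((α ^ 2 : ℝ) : ℂ)) * v y)
    with hhdef
  have hhc : ContinuousOn h (Icc a b) := by
    apply ContinuousOn.add
    · exact (Complex.continuous_conj.comp_continuousOn hDc).mul hDc
    · apply (Complex.continuous_conj.comp_continuousOn hvc).mul
      apply ContinuousOn.mul _ hvc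
      apply ContinuousOn.add _ continuousOn_const
      exact ((Complex.continuous_ofReal.comp_continuousOn hG2c).div
        ((Complex.continuous_ofReal.comp_continuousOn hGc).sub continuousOn_const)
        (fun y _ => hwne y))
  have hhint : IntervalIntegrable h volume a b := by
    apply ContinuousOn.intervalIntegrable
    rwa [uIcc_of_le hab.le]
  -- facts at interior points
  have key : ∀ y ∈ Ioo a b,
      HasDerivAt (fun t => (starRingEnd ℂ) (v t) * D t) (h y) y ∧
      deriv (deriv G) y = G2 y := by
    intro y hy
    have hmem : Icc a b ∈ nhds y := Icc_mem_nhds hy.1 hy.2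
    have hIoo : Ioo a b ∈ nhds y := isOpen_Ioo.mem_nhds hy
    -- D = deriv v near y, DG = deriv G near y
    have hDev : D =ᶠ[nhds y] deriv v := by
      filter_upwards [hIoo] with t ht
      exact derivWithin_of_mem_nhds (Icc_mem_nhds ht.1 ht.2)
    have hDGev : DG =ᶠ[nhds y] deriv G := by
      filter_upwards [hIoo] with t ht
      exact derivWithin_of_mem_nhds (Icc_mem_nhds ht.1 ht.2)
    have hDy : D y = deriv v y := derivWithin_of_mem_nhds hmem
    -- second derivative equalities
    have hG2y : G2 y = deriv (deriv G) y := by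
      rw [hG2def, derivWithin_of_mem_nhds hmem, hDGev.deriv_eq]
    have hDdy : derivWithin D (Icc a b) y = deriv (deriv v) y := by
      rw [derivWithin_of_mem_nhds hmem, hDev.deriv_eq]
    -- differentiability
    have hvd : HasDerivAt v (D y) y := by
      rw [hDy]
      exact ((hv.contDiffAt hmem).differentiableAt (by norm_num)).hasDerivAt
    have hDd : HasDerivAt D (derivWithin D (Icc a b) y) y := by
      rw [derivWithin_of_mem_nhds hmem]
      exact ((hD1.contDiffAt hmem).differentiableAt (by norm_num)).hasDerivAt
    have hconj : HasDerivAt (fun t => (starRingEnd ℂ) (v t)) ((starRingEnd ℂ) (D y)) y := by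
      exact hvd.star
    have hprod := hconj.mul hDd
    refine ⟨?_, hG2y.symm⟩
    have : h y = (starRingEnd ℂ) (D y) * D y +
        (starRingEnd ℂ) (v y) * derivWithin D (Icc a b) y := by
      simp only [hhdef]
      rw [hG2y, ← heq y (Ioo_subset_Icc_self hy), ← hDdy]
    rw [this]
    exact hprod
  -- FTC
  have hint0 : ∫ y in a..b, h y = 0 := by
    have := integral_eq_sub_of_hasDeriv_right_of_le hab.le
      (f := fun t => (starRingEnd ℂ) (v t) * D t) (f' := h)
      ((Complex.continuous_conj.comp_continuousOn hvc).mul hDc)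
      (fun y hy => ((key y hy).1).hasDerivWithinAt) hhint
    rw [this]
    simp [hva, hvb]
  -- take imaginary parts
  have him : ∫ y in a..b, (h y).im = 0 := by
    have := Complex.imCLM.intervalIntegral_comp_comm hhint (a := a) (b := b)
    simp only [Complex.imCLM_apply] at this
    rw [this, hint0]
    simp
  -- relate imaginary part to the target integrand
  have hae : ∀ᵐ x ∂(volume : Measure ℝ), x ∈ Set.uIoc a b →
      (h x).im = σ.im * (deriv (deriv G) x * ‖v x‖ ^ 2 / ‖((G x : ℝ) : ℂ) - σ‖ ^ 2) := by
    have hb : ∀ᵐ x ∂(volume : Measure ℝ), x ∉ ({b} : Set ℝ) :=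
      (Set.countable_singleton b).ae_notMem _
    filter_upwards [hb] with x hxb hxI
    rw [uIoc_of_le hab.le] at hxI
    have hx : x ∈ Ioo a b := ⟨hxI.1, lt_of_le_of_ne hxI.2 (by simpa using hxb)⟩
    have hG2x := (key x hx).2
    have hw := hwne x
    have hnsq : Complex.normSq (((G x : ℝ) : ℂ) - σ) = ‖((G x : ℝ) : ℂ) - σ‖ ^ 2 := by
      rw [Complex.normSq_eq_norm_sq]
    have hnv : Complex.normSq (v x) = ‖v x‖ ^ 2 := by
      rw [Complex.normSq_eq_norm_sq]
    have himw : (((G x : ℝ) : ℂ) - σ).im = -σ.im := by simp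
    have h1 : h x = (Complex.normSq (D x) : ℂ) +
        ((((G2 x : ℝ) : ℂ) / (((G x : ℝ) : ℂ) - σ) + ((α ^ 2 : ℝ) : ℂ)) *
          (Complex.normSq (v x) : ℂ)) := by
      simp only [hhdef]
      rw [mul_left_comm ((starRingEnd ℂ) (v x)), ← Complex.normSq_eq_conj_mul_self,
        ← Complex.normSq_eq_conj_mul_self]
    rw [h1, ← hG2x]
    simp only [Complex.add_im, Complex.ofReal_im, Complex.mul_im, Complex.ofReal_re,
      Complex.add_re, Complex.add_im, Complex.div_im, Complex.div_re, Complex.ofReal_im,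
      himw, hnsq, hnv]
    have hn0 : ‖((G x : ℝ) : ℂ) - σ‖ ^ 2 ≠ 0 := by
      exact pow_ne_zero 2 (norm_ne_zero_iff.mpr hw)
    field_simp
    ring
  have := intervalIntegral.integral_congr_ae (μ := volume) (f := fun x => (h x).im)
    (g := fun x => σ.im * (deriv (deriv G) x * ‖v x‖ ^ 2 / ‖((G x : ℝ) : ℂ) - σ‖ ^ 2)) hae
  rw [him] at this
  rw [intervalIntegral.integral_const_mul] at this
  have := this.symm
  rcases mul_eq_zero.mp this with h0 | h0
  · exact absurd h0 hσ
  · exact h0
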